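/- arXiv:1311.2851 — 7 statements merged into one kernel-verified Lean document; each statement's English description precedes it below -/
import Mathlib

section
/- If X₁, …, Xₙ are i.i.d. nonnegative random variables whose common distribution is heavy-everywhere (survival function supermultiplicative), then E[min(X₁,…,Xₙ)] ≤ E[X₁]/n. -/
open MeasureTheory

/-- If `X₁,…,Xₙ` are i.i.d. nonnegative random variables with heavy-everywhere
(supermultiplicative survival) common distribution, then
`E[min(X₁,…,Xₙ)] ≤ E[X₁]/n`. -/
theorem stmt_1 {Ω : Type*} [MeasurableSpace Ω] (μ : Measure Ω) [IsProbabilityMeasure μ]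
    (n : ℕ) (hn : 0 < n) (X : Fin n → Ω → ℝ)
    (hmeas : ∀ i, Measurable (X i))
    (hindep : ProbabilityTheory.iIndepFun X μ)
    (hident : ∀ i, Measure.map (X i) μ = Measure.map (X ⟨0, hn⟩) μ)
    (hnonneg : ∀ i ω, 0 ≤ X i ω)
    (hint : ∀ i, Integrable (X i) μ)
    (hheavy : ∀ a b : ℝ, 0 ≤ a → 0 ≤ b →
      (μ {ω | a + b < X ⟨0, hn⟩ ω}).toReal ≥
        (μ {ω | a < X ⟨0, hn⟩ ω}).toReal * (μ {ω | b < X ⟨0, hn⟩ ω}).toReal) :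
    ∫ ω, (⨅ i, X i ω) ∂μ ≤ (∫ ω, X ⟨0, hn⟩ ω ∂μ) / n := by
  haveI : Nonempty (Fin n) := Fin.pos_iff_nonempty.mp hn
  set i0 : Fin n := ⟨0, hn⟩
  set S : ℝ → ENNReal := fun t => μ {ω | t < X i0 ω} with hS
  set m : Ω → ℝ := fun ω => ⨅ i, X i ω with hm
  have hmmeas : Measurable m := Measurable.iInf hmeas
  have hmnn : ∀ ω, 0 ≤ m ω := fun ω => le_ciInf fun i => hnonneg i ω
  -- supermultiplicativity in ENNReal
  have hSmul : ∀ a b : ℝ, 0 ≤ a → 0 ≤ b → S a * S b ≤ S (a + b) := by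
    intro a b ha hb
    have h := hheavy a b ha hb
    rw [← ENNReal.toReal_mul] at h
    exact (ENNReal.toReal_le_toReal
      (ENNReal.mul_ne_top (measure_ne_top μ _) (measure_ne_top μ _))
      (measure_ne_top μ _)).mp h
  -- S t ^ k ≤ S (k t) for k ≥ 1
  have hSpow : ∀ t : ℝ, 0 ≤ t → ∀ k : ℕ, 1 ≤ k → S t ^ k ≤ S ((k : ℝ) * t) := by
    intro t ht
    intro k hk
    induction k with
    | zero => omega
    | succ k ih =>
      rcases Nat.eq_or_lt_of_le hk with h1 | h1
      · simp [← h1]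
      · have hk1 : 1 ≤ k := by omega
        calc S t ^ (k + 1) = S t ^ k * S t := by ring
          _ ≤ S ((k : ℝ) * t) * S t := by
              exact mul_le_mul_left (ih hk1) _
          _ ≤ S ((k : ℝ) * t + t) := hSmul _ _ (by positivity) ht
          _ = S (((k : ℕ) + 1 : ℝ) * t) := by ring_nf
          _ = S (((k + 1 : ℕ) : ℝ) * t) := by push_cast; ring_nf
  -- survival of the min
  have hmin : ∀ t : ℝ, μ {ω | t < m ω} = S t ^ n := by
    intro t
    have hset : {ω | t < m ω} = ⋂ i, {ω | t < X i ω} := by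
      ext ω
      simp only [Set.mem_setOf_eq, Set.mem_iInter]
      constructor
      · intro h i
        exact lt_of_lt_of_le h (ciInf_le ⟨0, fun x ⟨i, hi⟩ => hi ▸ hnonneg i ω⟩ i)
      · intro h
        obtain ⟨j, hj⟩ := exists_eq_ciInf_of_finite (f := fun i => X i ω)
        show t < ⨅ i, X i ω
        exact lt_of_lt_of_eq (h j) hj
    rw [hset, show (⋂ i, {ω : Ω | t < X i ω}) = ⋂ i, X i ⁻¹' Set.Ioi t from rfl,
      hindep.meas_iInter (fun i => ⟨Set.Ioi t, measurableSet_Ioi, rfl⟩)]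
    have heach : ∀ i : Fin n, μ (X i ⁻¹' Set.Ioi t) = S t := by
      intro i
      rw [← Measure.map_apply (hmeas i) measurableSet_Ioi, hident i,
        Measure.map_apply (hmeas i0) measurableSet_Ioi]
      rfl
    simp [heach]
  -- layer cake for min and for X i0
  have hlc_m : ∫⁻ ω, ENNReal.ofReal (m ω) ∂μ = ∫⁻ t in Set.Ioi 0, μ {ω | t < m ω} := by
    exact lintegral_eq_lintegral_meas_lt μ (Filter.Eventually.of_forall hmnn)
      hmmeas.aemeasurable
  have hlc_X : ∫⁻ ω, ENNReal.ofReal (X i0 ω) ∂μ = ∫⁻ t in Set.Ioi 0, S t := by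
    exact lintegral_eq_lintegral_meas_lt μ (Filter.Eventually.of_forall (hnonneg i0))
      (hmeas i0).aemeasurable
  -- change of variables : ∫⁻ t in Ioi 0, S (n t) = n⁻¹ * ∫⁻ t in Ioi 0, S t
  have hc : (0 : ℝ) < (n : ℝ) := by exact_mod_cast hn
  have hcne : (n : ℝ) ≠ 0 := ne_of_gt hc
  have hemb : MeasurableEmbedding (fun t : ℝ => (n : ℝ) * t) :=
    (Homeomorph.mulLeft₀ (n : ℝ) hcne).measurableEmbedding
  have hmap : Measure.map (fun t : ℝ => (n : ℝ) * t) (volume.restrict (Set.Ioi 0))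
      = (ENNReal.ofReal ((n : ℝ)⁻¹)) • (volume.restrict (Set.Ioi 0)) := by
    have hpre : (fun t : ℝ => (n : ℝ) * t) ⁻¹' (Set.Ioi 0) = Set.Ioi 0 := by
      ext x
      simp only [Set.mem_preimage, Set.mem_Ioi]
      constructor
      · intro h
        by_contra hx
        push_neg at hx
        nlinarith
      · intro h; positivity
    calc Measure.map (fun t : ℝ => (n : ℝ) * t) (volume.restrict (Set.Ioi 0))
        = Measure.map (fun t : ℝ => (n : ℝ) * t)
            (volume.restrict ((fun t : ℝ => (n : ℝ) * t) ⁻¹' (Set.Ioi 0))) := by rw [hpre]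
      _ = (Measure.map (fun t : ℝ => (n : ℝ) * t) volume).restrict (Set.Ioi 0) :=
            (Measure.restrict_map hemb.measurable measurableSet_Ioi).symm
      _ = (ENNReal.ofReal |(n : ℝ)⁻¹| • volume).restrict (Set.Ioi 0) := by
            rw [Real.map_volume_mul_left hcne]
      _ = (ENNReal.ofReal ((n : ℝ)⁻¹)) • (volume.restrict (Set.Ioi 0)) := by
            rw [abs_of_pos (by positivity), Measure.restrict_smul]
  have hcov : ∫⁻ t in Set.Ioi 0, S ((n : ℝ) * t)
      = (ENNReal.ofReal ((n : ℝ)⁻¹)) * ∫⁻ t in Set.Ioi 0, S t := by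
    have h1 := hemb.lintegral_map (f := S) (μ := volume.restrict (Set.Ioi 0))
    rw [hmap, lintegral_smul_measure] at h1
    exact h1.symm
  -- main ENNReal bound
  have hmain : ∫⁻ ω, ENNReal.ofReal (m ω) ∂μ
      ≤ (ENNReal.ofReal ((n : ℝ)⁻¹)) * ∫⁻ ω, ENNReal.ofReal (X i0 ω) ∂μ := by
    rw [hlc_m, hlc_X, ← hcov]
    apply setLIntegral_mono' measurableSet_Ioi
    intro t ht
    rw [hmin t]
    exact hSpow t (le_of_lt ht) n hn
  -- convert to real integrals
  have hIm : ∫ ω, m ω ∂μ = (∫⁻ ω, ENNReal.ofReal (m ω) ∂μ).toReal :=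
    integral_eq_lintegral_of_nonneg_ae (Filter.Eventually.of_forall hmnn)
      hmmeas.aestronglyMeasurable
  have hIX : ∫ ω, X i0 ω ∂μ = (∫⁻ ω, ENNReal.ofReal (X i0 ω) ∂μ).toReal :=
    integral_eq_lintegral_of_nonneg_ae (Filter.Eventually.of_forall (hnonneg i0))
      (hmeas i0).aestronglyMeasurable
  have hfin : ∫⁻ ω, ENNReal.ofReal (X i0 ω) ∂μ ≠ ⊤ := by
    have := (hint i0).hasFiniteIntegral
    rw [hasFiniteIntegral_iff_ofReal (Filter.Eventually.of_forall (hnonneg i0))] at this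
    exact this.ne
  rw [hIm, hIX]
  calc (∫⁻ ω, ENNReal.ofReal (m ω) ∂μ).toReal
      ≤ ((ENNReal.ofReal ((n : ℝ)⁻¹)) * ∫⁻ ω, ENNReal.ofReal (X i0 ω) ∂μ).toReal := by
        apply ENNReal.toReal_mono _ hmain
        exact ENNReal.mul_ne_top ENNReal.ofReal_ne_top hfin
    _ = (∫⁻ ω, ENNReal.ofReal (X i0 ω) ∂μ).toReal / n := by
        rw [ENNReal.toReal_mul, ENNReal.toReal_ofReal (by positivity)]
        field_simp
end

section
/- If X₁, …, Xₙ are i.i.d. nonnegative random variables whose common distribution is light-everywhere (survival function submultiplicative), then E[min(X₁,…,Xₙ)] ≥ E[X₁]/n. -/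
open MeasureTheory Set

/-- If `X₁,…,Xₙ` are i.i.d. nonnegative random variables with light-everywhere
(submultiplicative survival) common distribution, then
`E[min(X₁,…,Xₙ)] ≥ E[X₁]/n`. -/
theorem stmt_2 {Ω : Type*} [MeasurableSpace Ω] (μ : Measure Ω) [IsProbabilityMeasure μ]
    (n : ℕ) (hn : 0 < n) (X : Fin n → Ω → ℝ)
    (hmeas : ∀ i, Measurable (X i))
    (hindep : ProbabilityTheory.iIndepFun X μ)
    (hident : ∀ i, Measure.map (X i) μ = Measure.map (X ⟨0, hn⟩) μ)
    (hnonneg : ∀ i ω, 0 ≤ X i ω)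
    (hint : ∀ i, Integrable (X i) μ)
    (hlight : ∀ a b : ℝ, 0 ≤ a → 0 ≤ b →
      (μ {ω | a + b < X ⟨0, hn⟩ ω}).toReal ≤
        (μ {ω | a < X ⟨0, hn⟩ ω}).toReal * (μ {ω | b < X ⟨0, hn⟩ ω}).toReal) :
    ∫ ω, (⨅ i, X i ω) ∂μ ≥ (∫ ω, X ⟨0, hn⟩ ω ∂μ) / n := by
  classical
  set i0 : Fin n := ⟨0, hn⟩ with hi0
  haveI : Nonempty (Fin n) := ⟨i0⟩
  -- survival function
  set S : ℝ → ℝ := fun t => (μ {ω | t < X i0 ω}).toReal with hS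
  -- identical distributions: all survival measures agree
  have hid : ∀ (i : Fin n) (t : ℝ), μ {ω | t < X i ω} = μ {ω | t < X i0 ω} := by
    intro i t
    have h1 : {ω | t < X i ω} = X i ⁻¹' Ioi t := rfl
    have h2 : {ω | t < X i0 ω} = X i0 ⁻¹' Ioi t := rfl
    rw [h1, h2, ← Measure.map_apply (hmeas i) measurableSet_Ioi,
      ← Measure.map_apply (hmeas i0) measurableSet_Ioi, hident i]
  -- the infimum function
  set f : Ω → ℝ := fun ω => ⨅ i, X i ω with hf
  have hfmeas : Measurable f := Measurable.iInf hmeas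
  have hfnonneg : ∀ ω, 0 ≤ f ω := fun ω => le_ciInf fun i => hnonneg i ω
  have hfle : ∀ ω, f ω ≤ X i0 ω := fun ω =>
    ciInf_le (Finite.bddBelow_range _) i0
  have hfint : Integrable f μ := by
    refine Integrable.mono (hint i0) hfmeas.aestronglyMeasurable ?_
    filter_upwards with ω
    rw [Real.norm_eq_abs, Real.norm_eq_abs, abs_of_nonneg (hfnonneg ω),
      abs_of_nonneg (hnonneg i0 ω)]
    exact hfle ω
  -- measure of tail of min is S t ^ n
  have hmin_tail : ∀ t : ℝ, μ {ω | t < f ω} = μ {ω | t < X i0 ω} ^ n := by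
    intro t
    have hset : {ω | t < f ω} = ⋂ i, {ω | t < X i ω} := by
      ext ω
      simp only [mem_setOf_eq, mem_iInter, hf]
      constructor
      · intro h i
        exact lt_of_lt_of_le h (ciInf_le (Finite.bddBelow_range _) i)
      · intro h
        exact (Set.Finite.lt_csInf_iff (Set.finite_range _) (Set.range_nonempty _)).2
          (by rintro x ⟨i, rfl⟩; exact h i)
    rw [hset, hindep.meas_iInter (s := fun i => {ω | t < X i ω}) (fun i => ⟨Ioi t, measurableSet_Ioi, rfl⟩)]
    simp only [hid _ t]
    rw [Finset.prod_const, Finset.card_univ, Fintype.card_fin]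
  -- layercake for X i0
  have hX0 : ∫ ω, X i0 ω ∂μ = ∫ t in Ioi (0:ℝ), S t :=
    (hint i0).integral_eq_integral_meas_lt (Filter.Eventually.of_forall (hnonneg i0))
  -- layercake for min
  have hMin : ∫ ω, f ω ∂μ = ∫ t in Ioi (0:ℝ), (S t) ^ n := by
    rw [hfint.integral_eq_integral_meas_lt (Filter.Eventually.of_forall hfnonneg)]
    apply setIntegral_congr_fun measurableSet_Ioi
    intro t _
    simp only [hmin_tail t, hS]
    rw [measureReal_def, hmin_tail t, ENNReal.toReal_pow]
  -- S values in [0,1]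
  have hS01 : ∀ t, 0 ≤ S t ∧ S t ≤ 1 := by
    intro t
    refine ⟨ENNReal.toReal_nonneg, ?_⟩
    have h1 := prob_le_one (μ := μ) (s := {ω | t < X i0 ω})
    simpa using ENNReal.toReal_mono ENNReal.one_ne_top h1
  -- submultiplicativity iterated
  have hsub : ∀ t : ℝ, 0 ≤ t → S ((n : ℝ) * t) ≤ S t ^ n := by
    intro t ht
    have key : ∀ k : ℕ, S ((k : ℝ) * t) ≤ S t ^ k := by
      intro k
      induction k with
      | zero => simpa using (hS01 0).2
      | succ k ih =>
        have hkt : (0:ℝ) ≤ (k : ℝ) * t := by positivity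
        have : S ((k : ℝ) * t + t) ≤ S ((k : ℝ) * t) * S t := hlight _ _ hkt ht
        calc S ((↑(k+1) : ℝ) * t) = S ((k : ℝ) * t + t) := by push_cast; ring_nf
          _ ≤ S ((k : ℝ) * t) * S t := this
          _ ≤ S t ^ k * S t := by
              exact mul_le_mul_of_nonneg_right ih (hS01 t).1
          _ = S t ^ (k + 1) := by ring
    simpa using key n
  -- integrability of S^n on Ioi 0
  have hSmeas : Measurable S := by
    apply Measurable.ennreal_toReal
    exact Antitone.measurable (fun s t hst => measure_mono (fun ω h => lt_of_le_of_lt hst h))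
  have hSn_int : IntegrableOn (fun t => S t ^ n) (Ioi (0:ℝ)) := by
    constructor
    · exact ((hSmeas.pow_const n).aestronglyMeasurable).restrict
    · rw [hasFiniteIntegral_iff_norm]
      have heq : ∫⁻ t in Ioi (0:ℝ), ENNReal.ofReal ‖S t ^ n‖
          = ∫⁻ t in Ioi (0:ℝ), μ {ω | t < f ω} := by
        apply lintegral_congr
        intro t
        rw [Real.norm_eq_abs, abs_of_nonneg (pow_nonneg (hS01 t).1 n), hmin_tail t, hS,
          ← ENNReal.toReal_pow, ENNReal.ofReal_toReal]
        exact (ENNReal.pow_lt_top (measure_lt_top μ _)).ne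
      rw [heq, ← lintegral_eq_lintegral_meas_lt μ
        (Filter.Eventually.of_forall hfnonneg) hfmeas.aemeasurable]
      exact hfint.lintegral_lt_top
  -- comparison of integrals
  have hcomp : ∫ t in Ioi (0:ℝ), S ((n:ℝ) * t) ≤ ∫ t in Ioi (0:ℝ), S t ^ n := by
    apply integral_mono_of_nonneg
    · filter_upwards with t
      exact (hS01 _).1
    · exact hSn_int
    · filter_upwards [ae_restrict_mem measurableSet_Ioi] with t ht
      exact hsub t (le_of_lt ht)
  -- change of variables
  have hn' : (0:ℝ) < n := by exact_mod_cast hn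
  have hcv : ∫ t in Ioi (0:ℝ), S ((n:ℝ) * t) = (n:ℝ)⁻¹ • ∫ t in Ioi (0:ℝ), S t := by
    have := integral_comp_mul_left_Ioi S 0 hn'
    rwa [mul_zero] at this
  rw [ge_iff_le, div_le_iff₀ hn', hMin]
  calc ∫ ω, X i0 ω ∂μ = ∫ t in Ioi (0:ℝ), S t := hX0
    _ = (n:ℝ) * ((n:ℝ)⁻¹ • ∫ t in Ioi (0:ℝ), S t) := by
        rw [smul_eq_mul, ← mul_assoc, mul_inv_cancel₀ hn'.ne', one_mul]
    _ = (n:ℝ) * ∫ t in Ioi (0:ℝ), S ((n:ℝ) * t) := by rw [hcv]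
    _ ≤ (n:ℝ) * ∫ t in Ioi (0:ℝ), S t ^ n := by
        exact mul_le_mul_of_nonneg_left hcomp hn'.le
    _ = (∫ t in Ioi (0:ℝ), S t ^ n) * n := by ring
end

section
/- Let S₁, …, S_L : [0,∞) → [0,1] be survival functions each satisfying Sᵢ(a+b) ≥ Sᵢ(a)·Sᵢ(b) for all a, b ≥ 0, and suppose they are pointwise comparable in the sense that for all i, j and all a, b ≥ 0, if Sᵢ(a) > Sⱼ(a) then Sᵢ(b) ≥ Sⱼ(b). Then for any nonnegative weights p₁,…,p_L summing to 1, the mixture S = Σᵢ pᵢ Sᵢ also satisfies S(a+b) ≥ S(a)·S(b) for all a, b ≥ 0. -/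
/-- A pairwise-comparable mixture of heavy-everywhere (supermultiplicative)
survival functions is heavy-everywhere. -/
theorem stmt_4 (L : ℕ) (S : Fin L → ℝ → ℝ) (p : Fin L → ℝ)
    (hrange : ∀ i x, 0 ≤ x → S i x ∈ Set.Icc (0 : ℝ) 1)
    (hsuper : ∀ i, ∀ a b : ℝ, 0 ≤ a → 0 ≤ b → S i (a + b) ≥ S i a * S i b)
    (hcomp : ∀ i j, ∀ a b : ℝ, 0 ≤ a → 0 ≤ b → S i a > S j a → S i b ≥ S j b)
    (hp : ∀ i, 0 ≤ p i) (hsum : ∑ i, p i = 1) :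
    ∀ a b : ℝ, 0 ≤ a → 0 ≤ b →
      (∑ i, p i * S i (a + b)) ≥ (∑ i, p i * S i a) * (∑ i, p i * S i b) := by
  intro a b ha hb
  set f : Fin L → ℝ := fun i => S i a with hf
  set g : Fin L → ℝ := fun i => S i b with hg
  have key : ∀ i j, 0 ≤ (f i - f j) * (g i - g j) := by
    intro i j
    rcases lt_trichotomy (f i) (f j) with h | h | h
    · have := hcomp j i a b ha hb h
      have h1 : f i - f j ≤ 0 := by linarith
      have h2 : g i - g j ≤ 0 := by simp only [hg]; simpa using sub_nonpos.2 this
      nlinarith [h1, h2]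
    · simp [h]
    · have := hcomp i j a b ha hb h
      have h1 : 0 ≤ f i - f j := by linarith
      have h2 : 0 ≤ g i - g j := by simp only [hg]; simpa using sub_nonneg.2 this
      exact mul_nonneg h1 h2
  have hnn : 0 ≤ ∑ i, ∑ j, p i * p j * ((f i - f j) * (g i - g j)) := by
    refine Finset.sum_nonneg fun i _ => Finset.sum_nonneg fun j _ => ?_
    exact mul_nonneg (mul_nonneg (hp i) (hp j)) (key i j)
  have expand : ∑ i, ∑ j, p i * p j * ((f i - f j) * (g i - g j))
      = 2 * ((∑ i, p i * (f i * g i)) * (∑ i, p i)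
            - (∑ i, p i * f i) * (∑ i, p i * g i)) := by
    have hterm : ∀ i j : Fin L, p i * p j * ((f i - f j) * (g i - g j))
        = (p i * (f i * g i)) * p j - (p i * f i) * (p j * g j)
          - (p i * g i) * (p j * f j) + p i * (p j * (f j * g j)) := by
      intro i j; ring
    simp only [hterm, Finset.sum_add_distrib, Finset.sum_sub_distrib,
      ← Finset.sum_mul, ← Finset.mul_sum]
    ring
  have step1 : (∑ i, p i * f i) * (∑ i, p i * g i) ≤ ∑ i, p i * (f i * g i) := by
    rw [hsum, mul_one] at expand; linarith
  have step2 : ∑ i, p i * (f i * g i) ≤ ∑ i, p i * S i (a + b) := by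
    refine Finset.sum_le_sum fun i _ => ?_
    exact mul_le_mul_of_nonneg_left (hsuper i a b ha hb) (hp i)
  exact le_trans step1 step2
end

section
/- For any nonnegative weights p₁,…,p_L summing to 1, and rates μ₁,…,μ_L > 0, the function S(x) = Σᵢ pᵢ e^{−μᵢ x} satisfies S(a+b) ≥ S(a)·S(b) for all a, b ≥ 0 (i.e., a finite mixture of exponential distributions is heavy-everywhere). -/
open Real Finset

lemma cheb_aux {ι : Type*} (s : Finset ι) (p f g : ι → ℝ)
    (hp : ∀ i, 0 ≤ p i) (hs : ∑ i ∈ s, p i = 1)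
    (hm : ∀ i ∈ s, ∀ j ∈ s, 0 ≤ (f i - f j) * (g i - g j)) :
    (∑ i ∈ s, p i * f i) * (∑ i ∈ s, p i * g i) ≤ ∑ i ∈ s, p i * (f i * g i) := by
  have h0 : 0 ≤ ∑ i ∈ s, ∑ j ∈ s, p i * p j * ((f i - f j) * (g i - g j)) := by
    refine Finset.sum_nonneg fun i hi => Finset.sum_nonneg fun j hj => ?_
    exact mul_nonneg (mul_nonneg (hp i) (hp j)) (hm i hi j hj)
  have expand : ∑ i ∈ s, ∑ j ∈ s, p i * p j * ((f i - f j) * (g i - g j))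
      = 2 * (∑ i ∈ s, p i * (f i * g i)) - 2 * ((∑ i ∈ s, p i * f i) * (∑ i ∈ s, p i * g i)) := by
    have : ∀ i j, p i * p j * ((f i - f j) * (g i - g j))
        = (p i * (f i * g i)) * p j + p i * (p j * (f j * g j))
          - (p i * f i) * (p j * g j) - (p i * g i) * (p j * f j) := by
      intro i j; ring
    have step : ∀ i, ∑ j ∈ s, p i * p j * ((f i - f j) * (g i - g j))
        = p i * (f i * g i) * (∑ j ∈ s, p j) + p i * (∑ j ∈ s, p j * (f j * g j))
          - (p i * f i) * (∑ j ∈ s, p j * g j) - (p i * g i) * (∑ j ∈ s, p j * f j) := by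
      intro i
      rw [Finset.mul_sum, Finset.mul_sum, Finset.mul_sum, Finset.mul_sum,
        ← Finset.sum_add_distrib, ← Finset.sum_sub_distrib, ← Finset.sum_sub_distrib]
      exact Finset.sum_congr rfl fun j _ => by ring
    simp_rw [step, hs, mul_one]
    rw [Finset.sum_sub_distrib, Finset.sum_sub_distrib, Finset.sum_add_distrib,
      ← Finset.sum_mul, ← Finset.sum_mul, ← Finset.sum_mul, hs]
    ring
  linarith
/-- A finite mixture of exponential distributions is heavy-everywhere:
its survival function is supermultiplicative. -/
theorem stmt_5 (L : ℕ) (p : Fin L → ℝ) (μ : Fin L → ℝ)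
    (hp : ∀ i, 0 ≤ p i) (hsum : ∑ i, p i = 1) (hμ : ∀ i, 0 < μ i) :
    ∀ a b : ℝ, 0 ≤ a → 0 ≤ b →
      (∑ i, p i * Real.exp (-(μ i) * (a + b))) ≥
        (∑ i, p i * Real.exp (-(μ i) * a)) * (∑ i, p i * Real.exp (-(μ i) * b)) := by
  intro a b ha hb
  have key := cheb_aux Finset.univ p (fun i => Real.exp (-(μ i) * a))
    (fun i => Real.exp (-(μ i) * b)) hp hsum ?_
  · calc (∑ i, p i * Real.exp (-(μ i) * a)) * (∑ i, p i * Real.exp (-(μ i) * b))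
        ≤ ∑ i, p i * (Real.exp (-(μ i) * a) * Real.exp (-(μ i) * b)) := key
      _ = ∑ i, p i * Real.exp (-(μ i) * (a + b)) := by
          refine Finset.sum_congr rfl fun i _ => ?_
          rw [← Real.exp_add]; congr 1; ring
  · intro i _ j _
    rcases le_total (μ i) (μ j) with h | h
    · have h1 : Real.exp (-(μ j) * a) ≤ Real.exp (-(μ i) * a) :=
        Real.exp_le_exp.2 (by nlinarith)
      have h2 : Real.exp (-(μ j) * b) ≤ Real.exp (-(μ i) * b) :=
        Real.exp_le_exp.2 (by nlinarith)
      nlinarith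
    · have h1 : Real.exp (-(μ i) * a) ≤ Real.exp (-(μ j) * a) :=
        Real.exp_le_exp.2 (by nlinarith)
      have h2 : Real.exp (-(μ i) * b) ≤ Real.exp (-(μ j) * b) :=
        Real.exp_le_exp.2 (by nlinarith)
      nlinarith
end

section
/- If X₁ and X₂ are independent nonnegative random variables each with a light-everywhere distribution, then X₁ + X₂ has a light-everywhere distribution; i.e., if P(Xᵢ > a+b) ≤ P(Xᵢ > a)·P(Xᵢ > b) for i = 1,2 and all a, b ≥ 0, then P(X₁+X₂ > a+b) ≤ P(X₁+X₂ > a)·P(X₁+X₂ > b) for all a, b ≥ 0. -/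
open MeasureTheory

private lemma ennreal_of_toReal_mul {x y z : ENNReal} (hx : x ≠ ⊤) (hy : y ≠ ⊤) (hz : z ≠ ⊤)
    (h : x.toReal ≤ y.toReal * z.toReal) : x ≤ y * z := by
  have h2 := ENNReal.ofReal_le_ofReal h
  rwa [ENNReal.ofReal_toReal hx, ENNReal.ofReal_mul ENNReal.toReal_nonneg,
    ENNReal.ofReal_toReal hy, ENNReal.ofReal_toReal hz] at h2

private lemma sum_light_prod (ν₁ ν₂ : Measure ℝ) [IsProbabilityMeasure ν₁]
    [IsProbabilityMeasure ν₂]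
    (h1 : ν₁ {x : ℝ | x < 0} = 0) (h2 : ν₂ {y : ℝ | y < 0} = 0)
    (L1 : ∀ a b : ℝ, 0 ≤ a → 0 ≤ b → ν₁ {x | a + b < x} ≤ ν₁ {x | a < x} * ν₁ {x | b < x})
    (L2 : ∀ a b : ℝ, 0 ≤ a → 0 ≤ b → ν₂ {y | a + b < y} ≤ ν₂ {y | a < y} * ν₂ {y | b < y})
    (a b : ℝ) (ha : 0 ≤ a) (hb : 0 ≤ b) :
    (ν₁.prod ν₂) {p : ℝ × ℝ | a + b < p.1 + p.2} ≤
      (ν₁.prod ν₂) {p : ℝ × ℝ | a < p.1 + p.2} * (ν₁.prod ν₂) {p : ℝ × ℝ | b < p.1 + p.2} := by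
  have msum : ∀ c : ℝ, MeasurableSet {p : ℝ × ℝ | c < p.1 + p.2} := fun c =>
    measurableSet_lt measurable_const (measurable_fst.add measurable_snd)
  have mA : MeasurableSet {p : ℝ × ℝ | p.2 ≤ b} :=
    measurableSet_le measurable_snd measurable_const
  have mB : MeasurableSet {p : ℝ × ℝ | b < p.2} :=
    measurableSet_lt measurable_const measurable_snd
  -- splitting
  have hsplit : (ν₁.prod ν₂) {p : ℝ × ℝ | a + b < p.1 + p.2} ≤
      (ν₁.prod ν₂) ({p : ℝ × ℝ | a + b < p.1 + p.2} ∩ {p | p.2 ≤ b}) +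
      (ν₁.prod ν₂) ({p : ℝ × ℝ | a + b < p.1 + p.2} ∩ {p | b < p.2}) := by
    refine le_trans (measure_mono ?_) (measure_union_le _ _)
    intro p hp
    by_cases h : p.2 ≤ b
    · exact Or.inl ⟨hp, h⟩
    · exact Or.inr ⟨hp, lt_of_not_ge h⟩
  -- term 1
  have hterm1 : (ν₁.prod ν₂) ({p : ℝ × ℝ | a + b < p.1 + p.2} ∩ {p | p.2 ≤ b}) ≤
      ν₁ {x | a < x} * (ν₁.prod ν₂) ({p : ℝ × ℝ | b < p.1 + p.2} ∩ {p | p.2 ≤ b}) := by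
    rw [Measure.prod_apply_symm ((msum (a + b)).inter mA),
        Measure.prod_apply_symm ((msum b).inter mA),
        ← lintegral_const_mul' _ _ (measure_ne_top ν₁ _)]
    refine lintegral_mono fun y => ?_
    by_cases hy : y ≤ b
    · have e1 : (fun x => (x, y)) ⁻¹' ({p : ℝ × ℝ | a + b < p.1 + p.2} ∩ {p | p.2 ≤ b})
          = {x : ℝ | a + (b - y) < x} := by
        ext x
        simp only [Set.mem_preimage, Set.mem_inter_iff, Set.mem_setOf_eq]
        constructor
        · rintro ⟨h, -⟩; linarith
        · intro h; exact ⟨by linarith, hy⟩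
      have e2 : (fun x => (x, y)) ⁻¹' ({p : ℝ × ℝ | b < p.1 + p.2} ∩ {p | p.2 ≤ b})
          = {x : ℝ | b - y < x} := by
        ext x
        simp only [Set.mem_preimage, Set.mem_inter_iff, Set.mem_setOf_eq]
        constructor
        · rintro ⟨h, -⟩; linarith
        · intro h; exact ⟨by linarith, hy⟩
      rw [e1, e2]
      exact L1 a (b - y) ha (by linarith)
    · have e1 : (fun x => (x, y)) ⁻¹' ({p : ℝ × ℝ | a + b < p.1 + p.2} ∩ {p | p.2 ≤ b})
          = (∅ : Set ℝ) := by
        ext x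
        simp only [Set.mem_preimage, Set.mem_inter_iff, Set.mem_setOf_eq, Set.mem_empty_iff_false,
          iff_false, not_and]
        intro _
        exact hy
      rw [e1]
      simp
  -- term 2
  have hterm2 : (ν₁.prod ν₂) ({p : ℝ × ℝ | a + b < p.1 + p.2} ∩ {p | b < p.2}) ≤
      (ν₁.prod ν₂) {p : ℝ × ℝ | a < p.1 + p.2} * ν₂ {y | b < y} := by
    rw [Measure.prod_apply ((msum (a + b)).inter mB), Measure.prod_apply (msum a),
        ← lintegral_mul_const' _ _ (measure_ne_top ν₂ _)]
    refine lintegral_mono fun x => ?_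
    have e1 : Prod.mk x ⁻¹' ({p : ℝ × ℝ | a + b < p.1 + p.2} ∩ {p | b < p.2})
        = {y : ℝ | max (a - x) 0 + b < y} := by
      ext y
      simp only [Set.mem_preimage, Set.mem_inter_iff, Set.mem_setOf_eq]
      rw [← max_add_add_right, max_lt_iff]
      constructor
      · rintro ⟨h1', h2'⟩; exact ⟨by linarith, by linarith⟩
      · rintro ⟨h1', h2'⟩; exact ⟨by linarith, by linarith⟩
    rw [e1]
    calc ν₂ {y : ℝ | max (a - x) 0 + b < y}
        ≤ ν₂ {y : ℝ | max (a - x) 0 < y} * ν₂ {y : ℝ | b < y} :=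
          L2 (max (a - x) 0) b (le_max_right _ _) hb
      _ ≤ ν₂ (Prod.mk x ⁻¹' {p : ℝ × ℝ | a < p.1 + p.2}) * ν₂ {y : ℝ | b < y} := by
          refine mul_le_mul_left (measure_mono ?_) _
          intro y hy
          have : a - x < y := lt_of_le_of_lt (le_max_left _ _) hy
          simp only [Set.mem_preimage, Set.mem_setOf_eq]
          linarith
  -- identify marginals
  have hzero1 : (ν₁.prod ν₂) {p : ℝ × ℝ | p.1 < 0} = 0 := by
    have e : {p : ℝ × ℝ | p.1 < 0} = {x : ℝ | x < 0} ×ˢ (Set.univ : Set ℝ) := by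
      ext p; simp [Set.mem_prod]
    rw [e, Measure.prod_prod, measure_univ, mul_one, h1]
  have hzero2 : (ν₁.prod ν₂) {p : ℝ × ℝ | p.2 < 0} = 0 := by
    have e : {p : ℝ × ℝ | p.2 < 0} = (Set.univ : Set ℝ) ×ˢ {y : ℝ | y < 0} := by
      ext p; simp [Set.mem_prod]
    rw [e, Measure.prod_prod, measure_univ, one_mul, h2]
  have hfst : ν₁ {x : ℝ | a < x} ≤ (ν₁.prod ν₂) {p : ℝ × ℝ | a < p.1 + p.2} := by
    have hp : (ν₁.prod ν₂) ({x : ℝ | a < x} ×ˢ (Set.univ : Set ℝ)) = ν₁ {x : ℝ | a < x} := by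
      rw [Measure.prod_prod, measure_univ, mul_one]
    rw [← hp]
    refine le_trans (measure_mono ?_)
      (le_trans (measure_union_le {p : ℝ × ℝ | a < p.1 + p.2} {p : ℝ × ℝ | p.2 < 0}) ?_)
    · rintro ⟨x, y⟩ ⟨hx, -⟩
      by_cases hy : y < 0
      · exact Or.inr hy
      · push_neg at hy
        exact Or.inl (by simp only [Set.mem_setOf_eq] at hx ⊢; linarith)
    · rw [hzero2, add_zero]
  have hsnd : (ν₁.prod ν₂) {p : ℝ × ℝ | b < p.2} = ν₂ {y : ℝ | b < y} := by
    have e : {p : ℝ × ℝ | b < p.2} = (Set.univ : Set ℝ) ×ˢ {y : ℝ | b < y} := by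
      ext p; simp [Set.mem_prod]
    rw [e, Measure.prod_prod, measure_univ, one_mul]
  -- Q + B ≤ T b
  have hQB : (ν₁.prod ν₂) ({p : ℝ × ℝ | b < p.1 + p.2} ∩ {p | p.2 ≤ b}) +
      (ν₁.prod ν₂) {p : ℝ × ℝ | b < p.2} ≤ (ν₁.prod ν₂) {p : ℝ × ℝ | b < p.1 + p.2} := by
    have hdisj : Disjoint ({p : ℝ × ℝ | b < p.1 + p.2} ∩ {p | p.2 ≤ b}) {p : ℝ × ℝ | b < p.2} := by
      rw [Set.disjoint_left]
      intro p hp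
      simp only [Set.mem_inter_iff, Set.mem_setOf_eq] at hp
      simp only [Set.mem_setOf_eq]
      exact not_lt.2 hp.2
    rw [← measure_union hdisj mB]
    refine le_trans (measure_mono ?_)
      (le_trans (measure_union_le {p : ℝ × ℝ | b < p.1 + p.2} {p : ℝ × ℝ | p.1 < 0}) ?_)
    · rintro ⟨x, y⟩ hp
      rcases hp with ⟨hs, -⟩ | hby
      · exact Or.inl hs
      · by_cases hx : x < 0
        · exact Or.inr hx
        · push_neg at hx
          exact Or.inl (by simp only [Set.mem_setOf_eq] at hby ⊢; linarith)
    · rw [hzero1, add_zero]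
  -- combine
  refine le_trans hsplit (le_trans (add_le_add hterm1 hterm2) ?_)
  rw [← hsnd]
  calc ν₁ {x : ℝ | a < x} * (ν₁.prod ν₂) ({p : ℝ × ℝ | b < p.1 + p.2} ∩ {p | p.2 ≤ b}) +
        (ν₁.prod ν₂) {p : ℝ × ℝ | a < p.1 + p.2} * (ν₁.prod ν₂) {p : ℝ × ℝ | b < p.2}
      ≤ (ν₁.prod ν₂) {p : ℝ × ℝ | a < p.1 + p.2} *
          (ν₁.prod ν₂) ({p : ℝ × ℝ | b < p.1 + p.2} ∩ {p | p.2 ≤ b}) +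
        (ν₁.prod ν₂) {p : ℝ × ℝ | a < p.1 + p.2} * (ν₁.prod ν₂) {p : ℝ × ℝ | b < p.2} :=
        add_le_add_left (mul_le_mul_left hfst _) _
    _ = (ν₁.prod ν₂) {p : ℝ × ℝ | a < p.1 + p.2} *
          ((ν₁.prod ν₂) ({p : ℝ × ℝ | b < p.1 + p.2} ∩ {p | p.2 ≤ b}) +
            (ν₁.prod ν₂) {p : ℝ × ℝ | b < p.2}) := (mul_add _ _ _).symm
    _ ≤ (ν₁.prod ν₂) {p : ℝ × ℝ | a < p.1 + p.2} * (ν₁.prod ν₂) {p : ℝ × ℝ | b < p.1 + p.2} :=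
        mul_le_mul_right hQB _

/-- The sum of two independent nonnegative light-everywhere random variables
is light-everywhere (submultiplicative survival function). -/
theorem stmt_8 {Ω : Type*} [MeasurableSpace Ω] (μ : Measure Ω) [IsProbabilityMeasure μ]
    (X₁ X₂ : Ω → ℝ) (hm1 : Measurable X₁) (hm2 : Measurable X₂)
    (hindep : ProbabilityTheory.IndepFun X₁ X₂ μ)
    (hnn1 : ∀ ω, 0 ≤ X₁ ω) (hnn2 : ∀ ω, 0 ≤ X₂ ω)
    (hlight1 : ∀ a b : ℝ, 0 ≤ a → 0 ≤ b →
      (μ {ω | a + b < X₁ ω}).toReal ≤ (μ {ω | a < X₁ ω}).toReal * (μ {ω | b < X₁ ω}).toReal)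
    (hlight2 : ∀ a b : ℝ, 0 ≤ a → 0 ≤ b →
      (μ {ω | a + b < X₂ ω}).toReal ≤ (μ {ω | a < X₂ ω}).toReal * (μ {ω | b < X₂ ω}).toReal) :
    ∀ a b : ℝ, 0 ≤ a → 0 ≤ b →
      (μ {ω | a + b < X₁ ω + X₂ ω}).toReal ≤
        (μ {ω | a < X₁ ω + X₂ ω}).toReal * (μ {ω | b < X₁ ω + X₂ ω}).toReal := by
  intro a b ha hb
  haveI i1 : IsProbabilityMeasure (μ.map X₁) := Measure.isProbabilityMeasure_map hm1.aemeasurable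
  haveI i2 : IsProbabilityMeasure (μ.map X₂) := Measure.isProbabilityMeasure_map hm2.aemeasurable
  have hmap : μ.map (fun ω => (X₁ ω, X₂ ω)) = (μ.map X₁).prod (μ.map X₂) :=
    (ProbabilityTheory.indepFun_iff_map_prod_eq_prod_map_map hm1.aemeasurable
      hm2.aemeasurable).mp hindep
  have hsum : ∀ c : ℝ, μ {ω | c < X₁ ω + X₂ ω}
      = ((μ.map X₁).prod (μ.map X₂)) {p : ℝ × ℝ | c < p.1 + p.2} := by
    intro c
    rw [← hmap, Measure.map_apply (hm1.prodMk hm2)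
      (measurableSet_lt measurable_const (measurable_fst.add measurable_snd) : MeasurableSet {p : ℝ × ℝ | c < p.1 + p.2})]
    rfl
  have h1cdf : ∀ c : ℝ, (μ.map X₁) {x : ℝ | c < x} = μ {ω | c < X₁ ω} := fun c => by
    rw [Measure.map_apply hm1 (measurableSet_lt measurable_const measurable_id : MeasurableSet {x : ℝ | c < x})]; rfl
  have h2cdf : ∀ c : ℝ, (μ.map X₂) {y : ℝ | c < y} = μ {ω | c < X₂ ω} := fun c => by
    rw [Measure.map_apply hm2 (measurableSet_lt measurable_const measurable_id : MeasurableSet {y : ℝ | c < y})]; rfl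
  have L1 : ∀ a b : ℝ, 0 ≤ a → 0 ≤ b →
      (μ.map X₁) {x | a + b < x} ≤ (μ.map X₁) {x | a < x} * (μ.map X₁) {x | b < x} := by
    intro a b ha hb
    rw [h1cdf, h1cdf, h1cdf]
    exact ennreal_of_toReal_mul (measure_ne_top _ _) (measure_ne_top _ _) (measure_ne_top _ _)
      (hlight1 a b ha hb)
  have L2 : ∀ a b : ℝ, 0 ≤ a → 0 ≤ b →
      (μ.map X₂) {y | a + b < y} ≤ (μ.map X₂) {y | a < y} * (μ.map X₂) {y | b < y} := by
    intro a b ha hb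
    rw [h2cdf, h2cdf, h2cdf]
    exact ennreal_of_toReal_mul (measure_ne_top _ _) (measure_ne_top _ _) (measure_ne_top _ _)
      (hlight2 a b ha hb)
  have h1z : (μ.map X₁) {x : ℝ | x < 0} = 0 := by
    rw [Measure.map_apply hm1 (measurableSet_lt measurable_id measurable_const : MeasurableSet {x : ℝ | x < 0})]
    have e : X₁ ⁻¹' {x : ℝ | x < 0} = ∅ :=
      Set.eq_empty_of_forall_notMem fun ω h => absurd h (not_lt.2 (hnn1 ω))
    rw [e, measure_empty]
  have h2z : (μ.map X₂) {y : ℝ | y < 0} = 0 := by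
    rw [Measure.map_apply hm2 (measurableSet_lt measurable_id measurable_const : MeasurableSet {y : ℝ | y < 0})]
    have e : X₂ ⁻¹' {y : ℝ | y < 0} = ∅ :=
      Set.eq_empty_of_forall_notMem fun ω h => absurd h (not_lt.2 (hnn2 ω))
    rw [e, measure_empty]
  have key := sum_light_prod (μ.map X₁) (μ.map X₂) h1z h2z L1 L2 a b ha hb
  rw [← hsum, ← hsum, ← hsum] at key
  rw [← ENNReal.toReal_mul]
  exact ENNReal.toReal_mono (ENNReal.mul_ne_top (measure_ne_top μ _) (measure_ne_top μ _)) key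
end

section
/- The sum of finitely many independent nonnegative random variables, each light-everywhere, is light-everywhere: if X₁,…,Xₘ are independent with P(Xᵢ > a+b) ≤ P(Xᵢ > a)·P(Xᵢ > b) for all i and all a, b ≥ 0, then Y = X₁ + ⋯ + Xₘ satisfies P(Y > a+b) ≤ P(Y > a)·P(Y > b) for all a, b ≥ 0. -/
open MeasureTheory

/-- Key estimate: for independent `X, Y` with `Y` light-everywhere,
`P(X+Y > a+b, Y > b, X ≤ a) ≤ P(X+Y > a, X ≤ a) · P(Y > b)`. -/
lemma light_key {Ω : Type*} [MeasurableSpace Ω] (μ : Measure Ω) [IsProbabilityMeasure μ]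
    {X Y : Ω → ℝ} (hX : Measurable X) (hY : Measurable Y)
    (hind : ProbabilityTheory.IndepFun X Y μ)
    (hYl : ∀ a b : ℝ, 0 ≤ a → 0 ≤ b →
      (μ {ω | a + b < Y ω}).toReal ≤ (μ {ω | a < Y ω}).toReal * (μ {ω | b < Y ω}).toReal)
    (a b : ℝ) (ha : 0 ≤ a) (hb : 0 ≤ b) :
    μ {ω | a + b < X ω + Y ω ∧ b < Y ω ∧ X ω ≤ a} ≤
      μ {ω | a < X ω + Y ω ∧ X ω ≤ a} * μ {ω | b < Y ω} := by
  have hmap : μ.map (fun ω => (X ω, Y ω)) = (μ.map X).prod (μ.map Y) :=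
    (ProbabilityTheory.indepFun_iff_map_prod_eq_prod_map_map hX.aemeasurable
      hY.aemeasurable).mp hind
  haveI : IsProbabilityMeasure (μ.map X) := Measure.isProbabilityMeasure_map hX.aemeasurable
  haveI : IsProbabilityMeasure (μ.map Y) := Measure.isProbabilityMeasure_map hY.aemeasurable
  -- ENNReal version of lightness of Y
  have hYl' : ∀ c d : ℝ, 0 ≤ c → 0 ≤ d →
      μ {ω | c + d < Y ω} ≤ μ {ω | c < Y ω} * μ {ω | d < Y ω} := by
    intro c d hc hd
    have h := hYl c d hc hd
    rw [← ENNReal.toReal_mul] at h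
    exact (ENNReal.toReal_le_toReal (measure_ne_top _ _)
      (ENNReal.mul_ne_top (measure_ne_top _ _) (measure_ne_top _ _))).mp h
  have hmY : ∀ c : ℝ, (μ.map Y) {y | c < y} = μ {ω | c < Y ω} := by
    intro c
    rw [show {y : ℝ | c < y} = Set.Ioi c from rfl, Measure.map_apply hY measurableSet_Ioi]
    rfl
  set S : Set (ℝ × ℝ) := {p | a + b < p.1 + p.2 ∧ b < p.2 ∧ p.1 ≤ a} with hSdef
  set T : Set (ℝ × ℝ) := {p | a < p.1 + p.2 ∧ p.1 ≤ a} with hTdef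
  have hS : MeasurableSet S := by
    have h1 : MeasurableSet {p : ℝ × ℝ | a + b < p.1 + p.2} :=
      measurableSet_lt measurable_const (measurable_fst.add measurable_snd)
    have h2 : MeasurableSet {p : ℝ × ℝ | b < p.2} :=
      measurableSet_lt measurable_const measurable_snd
    have h3 : MeasurableSet {p : ℝ × ℝ | p.1 ≤ a} :=
      measurableSet_le measurable_fst measurable_const
    exact h1.inter (h2.inter h3)
  have hT : MeasurableSet T := by
    have h1 : MeasurableSet {p : ℝ × ℝ | a < p.1 + p.2} :=
      measurableSet_lt measurable_const (measurable_fst.add measurable_snd)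
    have h3 : MeasurableSet {p : ℝ × ℝ | p.1 ≤ a} :=
      measurableSet_le measurable_fst measurable_const
    exact h1.inter h3
  have hpre1 : {ω | a + b < X ω + Y ω ∧ b < Y ω ∧ X ω ≤ a} =
      (fun ω => (X ω, Y ω)) ⁻¹' S := rfl
  have hpre2 : {ω | a < X ω + Y ω ∧ X ω ≤ a} = (fun ω => (X ω, Y ω)) ⁻¹' T := rfl
  -- pointwise slice bound
  have hpt : ∀ x : ℝ, (μ.map Y) (Prod.mk x ⁻¹' S) ≤
      μ {ω | b < Y ω} * (μ.map Y) (Prod.mk x ⁻¹' T) := by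
    intro x
    have hsS : Prod.mk x ⁻¹' S = {y : ℝ | a + b < x + y ∧ b < y ∧ x ≤ a} := rfl
    have hsT : Prod.mk x ⁻¹' T = {y : ℝ | a < x + y ∧ x ≤ a} := rfl
    rw [hsS, hsT]
    by_cases hx : x ≤ a
    · have e1 : {y : ℝ | a + b < x + y ∧ b < y ∧ x ≤ a} = {y : ℝ | (a - x) + b < y} := by
        ext y
        simp only [Set.mem_setOf_eq]
        constructor
        · rintro ⟨h1, _, _⟩; linarith
        · intro h1
          have hax : 0 ≤ a - x := by linarith
          exact ⟨by linarith, by linarith, hx⟩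
      have e2 : {y : ℝ | a < x + y ∧ x ≤ a} = {y : ℝ | a - x < y} := by
        ext y
        simp only [Set.mem_setOf_eq]
        constructor
        · rintro ⟨h1, _⟩; linarith
        · intro h1; exact ⟨by linarith, hx⟩
      rw [e1, e2, hmY, hmY]
      calc μ {ω | (a - x) + b < Y ω} ≤ μ {ω | a - x < Y ω} * μ {ω | b < Y ω} :=
            hYl' (a - x) b (by linarith) hb
        _ = μ {ω | b < Y ω} * μ {ω | a - x < Y ω} := mul_comm _ _
    · have e1 : {y : ℝ | a + b < x + y ∧ b < y ∧ x ≤ a} = ∅ := by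
        ext y; simp only [Set.mem_setOf_eq, Set.mem_empty_iff_false, iff_false]
        rintro ⟨_, _, h3⟩; exact hx h3
      rw [e1]
      simp
  calc μ {ω | a + b < X ω + Y ω ∧ b < Y ω ∧ X ω ≤ a}
      = (μ.map (fun ω => (X ω, Y ω))) S := by
        rw [Measure.map_apply (hX.prodMk hY) hS, hpre1]
    _ = ((μ.map X).prod (μ.map Y)) S := by rw [hmap]
    _ = ∫⁻ x, (μ.map Y) (Prod.mk x ⁻¹' S) ∂(μ.map X) := Measure.prod_apply hS
    _ ≤ ∫⁻ x, μ {ω | b < Y ω} * (μ.map Y) (Prod.mk x ⁻¹' T) ∂(μ.map X) :=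
        lintegral_mono fun x => hpt x
    _ = μ {ω | b < Y ω} * ∫⁻ x, (μ.map Y) (Prod.mk x ⁻¹' T) ∂(μ.map X) :=
        lintegral_const_mul' _ _ (measure_ne_top μ _)
    _ = μ {ω | b < Y ω} * ((μ.map X).prod (μ.map Y)) T := by rw [Measure.prod_apply hT]
    _ = μ {ω | b < Y ω} * μ {ω | a < X ω + Y ω ∧ X ω ≤ a} := by
        rw [← hmap, Measure.map_apply (hX.prodMk hY) hT, ← hpre2]
    _ = μ {ω | a < X ω + Y ω ∧ X ω ≤ a} * μ {ω | b < Y ω} := mul_comm _ _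

/-- Two-variable case: the sum of two independent nonnegative light-everywhere
random variables is light-everywhere. -/
lemma light_add {Ω : Type*} [MeasurableSpace Ω] (μ : Measure Ω) [IsProbabilityMeasure μ]
    {X Y : Ω → ℝ} (hX : Measurable X) (hY : Measurable Y)
    (hind : ProbabilityTheory.IndepFun X Y μ)
    (hXn : ∀ ω, 0 ≤ X ω) (hYn : ∀ ω, 0 ≤ Y ω)
    (hXl : ∀ a b : ℝ, 0 ≤ a → 0 ≤ b →
      (μ {ω | a + b < X ω}).toReal ≤ (μ {ω | a < X ω}).toReal * (μ {ω | b < X ω}).toReal)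
    (hYl : ∀ a b : ℝ, 0 ≤ a → 0 ≤ b →
      (μ {ω | a + b < Y ω}).toReal ≤ (μ {ω | a < Y ω}).toReal * (μ {ω | b < Y ω}).toReal)
    (a b : ℝ) (ha : 0 ≤ a) (hb : 0 ≤ b) :
    (μ {ω | a + b < X ω + Y ω}).toReal ≤
      (μ {ω | a < X ω + Y ω}).toReal * (μ {ω | b < X ω + Y ω}).toReal := by
  suffices h : μ {ω | a + b < X ω + Y ω} ≤
      μ {ω | a < X ω + Y ω} * μ {ω | b < X ω + Y ω} by
    have h2 := ENNReal.toReal_mono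
      (ENNReal.mul_ne_top (measure_ne_top _ _) (measure_ne_top _ _)) h
    rwa [ENNReal.toReal_mul] at h2
  set p := μ {ω | a < X ω} with hp
  set q := μ {ω | a < X ω + Y ω ∧ X ω ≤ a} with hq
  set r := μ {ω | b < Y ω} with hr
  set s := μ {ω | b < X ω + Y ω ∧ Y ω ≤ b} with hs
  -- the three bounds
  have hB : μ {ω | a + b < X ω + Y ω ∧ b < Y ω ∧ X ω ≤ a} ≤ q * r :=
    light_key μ hX hY hind hYl a b ha hb
  have hA : μ {ω | a + b < X ω + Y ω ∧ a < X ω ∧ Y ω ≤ b} ≤ s * p := by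
    have h := light_key μ hY hX hind.symm hXl b a hb ha
    have e1 : {ω | b + a < Y ω + X ω ∧ a < X ω ∧ Y ω ≤ b} =
        {ω | a + b < X ω + Y ω ∧ a < X ω ∧ Y ω ≤ b} := by
      ext ω; simp only [Set.mem_setOf_eq]
      constructor
      · rintro ⟨h1, h2, h3⟩; exact ⟨by linarith, h2, h3⟩
      · rintro ⟨h1, h2, h3⟩; exact ⟨by linarith, h2, h3⟩
    have e2 : {ω | b < Y ω + X ω ∧ Y ω ≤ b} = {ω | b < X ω + Y ω ∧ Y ω ≤ b} := by
      ext ω; simp only [Set.mem_setOf_eq]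
      constructor
      · rintro ⟨h1, h2⟩; exact ⟨by linarith, h2⟩
      · rintro ⟨h1, h2⟩; exact ⟨by linarith, h2⟩
    rw [e1, e2] at h
    exact h
  have hC : μ ({ω | a < X ω} ∩ {ω | b < Y ω}) = p * r := by
    have h := hind.measure_inter_preimage_eq_mul (Set.Ioi a) (Set.Ioi b)
      measurableSet_Ioi measurableSet_Ioi
    exact h
  -- cover
  have hcover : {ω | a + b < X ω + Y ω} ⊆
      {ω | a + b < X ω + Y ω ∧ a < X ω ∧ Y ω ≤ b} ∪
        ({ω | a + b < X ω + Y ω ∧ b < Y ω ∧ X ω ≤ a} ∪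
          ({ω | a < X ω} ∩ {ω | b < Y ω})) := by
    intro ω hω
    simp only [Set.mem_setOf_eq] at hω
    by_cases h1 : Y ω ≤ b
    · exact Or.inl ⟨hω, by linarith, h1⟩
    · push_neg at h1
      by_cases h2 : X ω ≤ a
      · exact Or.inr (Or.inl ⟨hω, h1, h2⟩)
      · push_neg at h2
        exact Or.inr (Or.inr ⟨h2, h1⟩)
  have hmain : μ {ω | a + b < X ω + Y ω} ≤ s * p + (q * r + p * r) := by
    calc μ {ω | a + b < X ω + Y ω} ≤
        μ ({ω | a + b < X ω + Y ω ∧ a < X ω ∧ Y ω ≤ b} ∪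
          ({ω | a + b < X ω + Y ω ∧ b < Y ω ∧ X ω ≤ a} ∪
            ({ω | a < X ω} ∩ {ω | b < Y ω}))) := measure_mono hcover
      _ ≤ μ {ω | a + b < X ω + Y ω ∧ a < X ω ∧ Y ω ≤ b} +
          (μ {ω | a + b < X ω + Y ω ∧ b < Y ω ∧ X ω ≤ a} +
            μ ({ω | a < X ω} ∩ {ω | b < Y ω})) :=
        (measure_union_le _ _).trans (add_le_add (le_refl _) (measure_union_le _ _))
      _ ≤ s * p + (q * r + p * r) := by
          refine add_le_add hA (add_le_add hB ?_)
          rw [hC]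
  have halg : s * p + (q * r + p * r) ≤ (p + q) * (r + s) := by
    have h1 : (p + q) * (r + s) = (s * p + (q * r + p * r)) + q * s := by ring
    rw [h1]
    exact le_self_add
  have hpq : p + q ≤ μ {ω | a < X ω + Y ω} := by
    have hdis : Disjoint {ω | a < X ω} {ω | a < X ω + Y ω ∧ X ω ≤ a} := by
      rw [Set.disjoint_left]
      intro ω h1 h2
      exact absurd h2.2 (not_le.mpr h1)
    have hm2 : MeasurableSet {ω | a < X ω + Y ω ∧ X ω ≤ a} :=
      (measurableSet_lt measurable_const (hX.add hY)).inter
        (measurableSet_le hX measurable_const)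
    rw [hp, hq, ← measure_union hdis hm2]
    apply measure_mono
    intro ω hω
    simp only [Set.mem_union, Set.mem_setOf_eq] at hω ⊢
    rcases hω with h | h
    · have := hYn ω; linarith
    · exact h.1
  have hrs : r + s ≤ μ {ω | b < X ω + Y ω} := by
    have hdis : Disjoint {ω | b < Y ω} {ω | b < X ω + Y ω ∧ Y ω ≤ b} := by
      rw [Set.disjoint_left]
      intro ω h1 h2
      exact absurd h2.2 (not_le.mpr h1)
    have hm2 : MeasurableSet {ω | b < X ω + Y ω ∧ Y ω ≤ b} :=
      (measurableSet_lt measurable_const (hX.add hY)).inter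
        (measurableSet_le hY measurable_const)
    rw [hr, hs, ← measure_union hdis hm2]
    apply measure_mono
    intro ω hω
    simp only [Set.mem_union, Set.mem_setOf_eq] at hω ⊢
    rcases hω with h | h
    · have := hXn ω; linarith
    · exact h.1
  calc μ {ω | a + b < X ω + Y ω} ≤ s * p + (q * r + p * r) := hmain
    _ ≤ (p + q) * (r + s) := halg
    _ ≤ μ {ω | a < X ω + Y ω} * μ {ω | b < X ω + Y ω} := mul_le_mul' hpq hrs

/-- The sum of finitely many independent nonnegative light-everywhere random
variables is light-everywhere. -/
theorem stmt_9 {Ω : Type*} [MeasurableSpace Ω] (μ : Measure Ω) [IsProbabilityMeasure μ]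
    (m : ℕ) (X : Fin m → Ω → ℝ) (hmeas : ∀ i, Measurable (X i))
    (hindep : ProbabilityTheory.iIndepFun X μ)
    (hnonneg : ∀ i ω, 0 ≤ X i ω)
    (hlight : ∀ i, ∀ a b : ℝ, 0 ≤ a → 0 ≤ b →
      (μ {ω | a + b < X i ω}).toReal ≤
        (μ {ω | a < X i ω}).toReal * (μ {ω | b < X i ω}).toReal) :
    ∀ a b : ℝ, 0 ≤ a → 0 ≤ b →
      (μ {ω | a + b < ∑ i, X i ω}).toReal ≤
        (μ {ω | a < ∑ i, X i ω}).toReal * (μ {ω | b < ∑ i, X i ω}).toReal := by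
  classical
  have key : ∀ s : Finset (Fin m), ∀ a b : ℝ, 0 ≤ a → 0 ≤ b →
      (μ {ω | a + b < ∑ i ∈ s, X i ω}).toReal ≤
        (μ {ω | a < ∑ i ∈ s, X i ω}).toReal * (μ {ω | b < ∑ i ∈ s, X i ω}).toReal := by
    intro s
    induction s using Finset.induction_on with
    | empty =>
      intro a b ha hb
      simp only [Finset.sum_empty]
      have he : {ω : Ω | a + b < 0} = ∅ := by
        ext ω
        simp only [Set.mem_setOf_eq, Set.mem_empty_iff_false, iff_false, not_lt]
        linarith
      rw [he]
      simp only [measure_empty, ENNReal.toReal_zero]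
      positivity
    | @insert j s hj ih =>
      intro a b ha hb
      simp only [Finset.sum_insert hj]
      have hYmeas : Measurable (fun ω => ∑ i ∈ s, X i ω) := by
        apply Finset.measurable_sum
        intro i _
        exact hmeas i
      have hindXY : ProbabilityTheory.IndepFun (X j) (fun ω => ∑ i ∈ s, X i ω) μ := by
        have h := (hindep.indepFun_finset_sum_of_notMem hmeas hj).symm
        have e : (∑ i ∈ s, X i) = fun ω => ∑ i ∈ s, X i ω := by
          funext ω
          simp [Finset.sum_apply]
        rwa [e] at h
      exact light_add μ (hmeas j) hYmeas hindXY (hnonneg j)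
        (fun ω => Finset.sum_nonneg fun i _ => hnonneg i ω) (hlight j) ih a b ha hb
  intro a b ha hb
  exact key Finset.univ a b ha hb
end

section
/- Let 0 ≤ c₁ < c₂ < 2c₁ and let X take value c₁ with probability p and value c₂ with probability 1−p, for some p ∈ [0,1]. Then X is light-everywhere: P(X > a+b) ≤ P(X > a)·P(X > b) for all a, b ≥ 0. -/
open MeasureTheory

/-- A two-point random variable supported on `{c₁, c₂}` with
`0 ≤ c₁ < c₂ < 2c₁` is light-everywhere. -/
theorem stmt_13 {Ω : Type*} [MeasurableSpace Ω] (μ : Measure Ω) [IsProbabilityMeasure μ]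
    (c₁ c₂ p : ℝ) (hc₁ : 0 ≤ c₁) (hlt : c₁ < c₂) (hlt2 : c₂ < 2 * c₁)
    (hp0 : 0 ≤ p) (hp1 : p ≤ 1)
    (X : Ω → ℝ) (hsupp : ∀ ω, X ω = c₁ ∨ X ω = c₂)
    (hprob : μ {ω | X ω = c₁} = ENNReal.ofReal p) :
    ∀ a b : ℝ, 0 ≤ a → 0 ≤ b →
      (μ {ω | a + b < X ω}).toReal ≤
        (μ {ω | a < X ω}).toReal * (μ {ω | b < X ω}).toReal := by
  intro a b ha hb
  have hone : ∀ t : ℝ, t < c₁ → {ω | t < X ω} = Set.univ := by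
    intro t ht
    ext ω; simp only [Set.mem_setOf_eq, Set.mem_univ, iff_true]
    rcases hsupp ω with h | h <;> rw [h] <;> linarith
  have hle1 : ∀ s : Set Ω, (μ s).toReal ≤ 1 := by
    intro s
    have h := measure_mono (Set.subset_univ s) (μ := μ)
    rw [measure_univ] at h
    calc (μ s).toReal ≤ (1 : ENNReal).toReal := ENNReal.toReal_mono (by simp) h
    _ = 1 := by simp
  by_cases hab : c₂ ≤ a + b
  · have hempty : {ω | a + b < X ω} = ∅ := by
      ext ω; simp only [Set.mem_setOf_eq, Set.mem_empty_iff_false, iff_false, not_lt]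
      rcases hsupp ω with h | h <;> rw [h] <;> linarith
    rw [hempty]
    simp only [measure_empty, ENNReal.toReal_zero]
    positivity
  push_neg at hab
  by_cases hac : c₁ ≤ a
  · have hbc : b < c₁ := by linarith
    have heq : {ω | a + b < X ω} = {ω | a < X ω} := by
      ext ω; simp only [Set.mem_setOf_eq]
      rcases hsupp ω with h | h <;> rw [h] <;> constructor <;> intro <;> linarith
    rw [heq, hone b hbc, measure_univ]
    simp
  push_neg at hac
  by_cases hbc : c₁ ≤ b
  · have heq : {ω | a + b < X ω} = {ω | b < X ω} := by
      ext ω; simp only [Set.mem_setOf_eq]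
      rcases hsupp ω with h | h <;> rw [h] <;> constructor <;> intro <;> linarith
    rw [heq, hone a hac, measure_univ]
    simp
  push_neg at hbc
  rw [hone a hac, hone b hbc, measure_univ]
  simpa using hle1 _
end
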